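/- For every n ≥ 5, the commutator subgroup K_n of the braid group B_n is a perfect group: the commutator subgroup of K_n equals all of K_n (equivalently, K_n / [K_n, K_n] is trivial). -/

import Mathlib

def braidRels (n : ℕ) : Set (FreeGroup (Fin (n - 1))) :=
  {r | (∃ i j : Fin (n - 1), 2 ≤ |(i : ℤ) - (j : ℤ)| ∧
        r = FreeGroup.of i * FreeGroup.of j * (FreeGroup.of i)⁻¹ * (FreeGroup.of j)⁻¹) ∨
       (∃ i j : Fin (n - 1), |(i : ℤ) - (j : ℤ)| = 1 ∧
        r = FreeGroup.of i * FreeGroup.of j * FreeGroup.of i *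
            (FreeGroup.of j)⁻¹ * (FreeGroup.of i)⁻¹ * (FreeGroup.of j)⁻¹)}

/-- The braid group `B n` on `n` strands, presented with generators `σ_1, …, σ_{n-1}`. -/
abbrev BraidGroup (n : ℕ) : Type := PresentedGroup (braidRels n)

/-- The generator `σ_{i+1}` of the braid group. -/
def braidGen {n : ℕ} (i : Fin (n - 1)) : BraidGroup n := PresentedGroup.of i

private lemma braid_mk_eq_one {n : ℕ} {r : FreeGroup (Fin (n - 1))} (h : r ∈ braidRels n) :
    PresentedGroup.mk (braidRels n) r = 1 :=
  (QuotientGroup.eq_one_iff r).mpr (Subgroup.subset_normalClosure h)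

private lemma braidGen_comm {n : ℕ} {i j : Fin (n - 1)} (h : 2 ≤ |(i : ℤ) - (j : ℤ)|) :
    braidGen i * braidGen j = braidGen j * braidGen i := by
  have h1 := braid_mk_eq_one (n := n) (Or.inl ⟨i, j, h, rfl⟩)
  simp only [map_mul, map_inv] at h1
  have h2 : braidGen i * braidGen j * (braidGen i)⁻¹ * (braidGen j)⁻¹ = 1 := h1
  rwa [mul_inv_eq_one, mul_inv_eq_iff_eq_mul] at h2

private lemma braidGen_braid {n : ℕ} {i j : Fin (n - 1)} (h : |(i : ℤ) - (j : ℤ)| = 1) :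
    braidGen i * braidGen j * braidGen i = braidGen j * braidGen i * braidGen j := by
  have h1 := braid_mk_eq_one (n := n) (Or.inr ⟨i, j, h, rfl⟩)
  simp only [map_mul, map_inv] at h1
  have h2 : braidGen i * braidGen j * braidGen i * (braidGen j)⁻¹ * (braidGen i)⁻¹ *
      (braidGen j)⁻¹ = 1 := h1
  rwa [mul_inv_eq_one, mul_inv_eq_iff_eq_mul, mul_inv_eq_iff_eq_mul] at h2

/-- For `n ≥ 5`, the commutator subgroup of the braid group is a perfect group. -/
theorem Kn_perfect (n : ℕ) (hn : 5 ≤ n) :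
    commutator ↥(commutator (BraidGroup n)) = ⊤ := by
  set G := BraidGroup n with hG
  set K : Subgroup G := commutator G with hKdef
  haveI hKn : K.Normal := Subgroup.commutator_normal ⊤ ⊤
  haveI hNn : (⁅K, K⁆ : Subgroup G).Normal := Subgroup.commutator_normal K K
  set N : Subgroup G := ⁅K, K⁆ with hNdef
  -- The key step: K ≤ ⁅K, K⁆ as subgroups of G.
  have key : K ≤ N := by
    set π : G →* G ⧸ N := QuotientGroup.mk' N with hπ
    have hπsurj : Function.Surjective π := QuotientGroup.mk'_surjective N
    set A : Subgroup (G ⧸ N) := K.map π with hA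
    have hAnormal : A.Normal := hKn.map π hπsurj
    have hAcomm : ∀ a ∈ A, ∀ b ∈ A, Commute a b := by
      rintro _ ⟨x, hx, rfl⟩ _ ⟨y, hy, rfl⟩
      rw [← commutatorElement_eq_one_iff_commute, ← map_commutatorElement]
      exact (QuotientGroup.eq_one_iff _).mpr (Subgroup.commutator_mem_commutator hx hy)
    -- generators of the quotient
    set s : Fin (n - 1) → G ⧸ N := fun i => π (braidGen i) with hs
    set i0 : Fin (n - 1) := ⟨0, by omega⟩ with hi0
    set i3 : Fin (n - 1) := ⟨3, by omega⟩ with hi3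
    -- σ_i σ_0⁻¹ lies in K
    have kmemaux : ∀ m (h : m < n - 1), braidGen ⟨m, h⟩ * (braidGen i0)⁻¹ ∈ K := by
      intro m
      induction m with
      | zero => intro h; convert K.one_mem using 1; exact mul_inv_cancel _
      | succ m ih =>
        intro h
        have hm : m < n - 1 := by omega
        set a : G := braidGen ⟨m, hm⟩ with ha
        set b : G := braidGen ⟨m + 1, h⟩ with hb
        have habs : |(((⟨m, hm⟩ : Fin (n - 1)) : ℤ)) - ((⟨m + 1, h⟩ : Fin (n - 1)) : ℤ)| = 1 := by
          simp only [Fin.val_mk]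
          rw [show ((m : ℤ)) - ((m + 1 : ℕ) : ℤ) = -1 by push_cast; ring]
          norm_num
        have hbr : a * b * a = b * a * b := braidGen_braid habs
        have h1 : @Bracket.bracket G G commutatorElement (a * b) a = (a * b * a) * (b⁻¹ * a⁻¹ * a⁻¹) := by
          rw [commutatorElement_def]; group
        have h2 : b * a⁻¹ = @Bracket.bracket G G commutatorElement (a * b) a := by rw [h1, hbr]; group
        have h3 : b * a⁻¹ ∈ K :=
          h2 ▸ Subgroup.commutator_mem_commutator (Subgroup.mem_top _) (Subgroup.mem_top _)
        have h4 : b * (braidGen i0)⁻¹ = (b * a⁻¹) * (a * (braidGen i0)⁻¹) := by group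
        rw [h4]
        exact K.mul_mem h3 (ih hm)
    have kmem : ∀ i : Fin (n - 1), braidGen i * (braidGen i0)⁻¹ ∈ K := by
      intro i
      simpa using kmemaux i.val i.isLt
    set k : Fin (n - 1) → G ⧸ N := fun i => s i * (s i0)⁻¹ with hk
    have hkA : ∀ i, k i ∈ A :=
      fun i => ⟨braidGen i * (braidGen i0)⁻¹, kmem i, by simp [hs, hk, map_mul, map_inv]⟩
    set s0 : G ⧸ N := s i0 with hs0
    have hsi : ∀ i, s i = k i * s0 := fun i => by
      rw [hk]; simp
    have hcommQ : ∀ i j : Fin (n - 1), 2 ≤ |(i : ℤ) - (j : ℤ)| → s i * s j = s j * s i := by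
      intro i j hij
      simpa [hs, map_mul] using congrArg π (braidGen_comm hij)
    -- the distant-commutation trick
    have hstep : ∀ i j : Fin (n - 1), 2 ≤ |(i : ℤ) - (j : ℤ)| →
        k i * (s0 * k i * s0⁻¹)⁻¹ = k j * (s0 * k j * s0⁻¹)⁻¹ := by
      intro i j hij
      have e1 : k i * s0 * (k j * s0) = k j * s0 * (k i * s0) := by
        rw [← hsi, ← hsi]; exact hcommQ i j hij
      have e2 : k i * (s0 * k j * s0⁻¹) = k j * (s0 * k i * s0⁻¹) := by
        calc k i * (s0 * k j * s0⁻¹) = k i * s0 * (k j * s0) * (s0 * s0)⁻¹ := by group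
          _ = k j * s0 * (k i * s0) * (s0 * s0)⁻¹ := by rw [e1]
          _ = k j * (s0 * k i * s0⁻¹) := by group
      have hbi : s0 * k i * s0⁻¹ ∈ A := hAnormal.conj_mem _ (hkA i) s0
      have hbj : s0 * k j * s0⁻¹ ∈ A := hAnormal.conj_mem _ (hkA j) s0
      set bi : G ⧸ N := s0 * k i * s0⁻¹ with hbi'
      set bj : G ⧸ N := s0 * k j * s0⁻¹ with hbj'
      have hcbb : bi * bj⁻¹ = bj⁻¹ * bi := ((hAcomm _ hbi _ hbj).inv_right).eq
      have e3 : k i = k j * bi * bj⁻¹ := by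
        rw [show k j * bi * bj⁻¹ = (k j * bi) * bj⁻¹ from rfl, ← e2]; group
      rw [e3]
      calc k j * bi * bj⁻¹ * bi⁻¹ = k j * (bi * bj⁻¹) * bi⁻¹ := by group
        _ = k j * (bj⁻¹ * bi) * bi⁻¹ := by rw [hcbb]
        _ = k j * bj⁻¹ := by group
    have hk0 : k i0 = 1 := by simp [hk, hs0]
    have hbase : k i0 * (s0 * k i0 * s0⁻¹)⁻¹ = 1 := by rw [hk0]; group
    have hc1 : ∀ i, k i * (s0 * k i * s0⁻¹)⁻¹ = 1 := by
      intro i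
      have hiz : ((i : Fin (n - 1)) : ℤ) = (i.val : ℤ) := rfl
      have h0z : ((i0 : Fin (n - 1)) : ℤ) = 0 := by simp [hi0]
      have h3z : ((i3 : Fin (n - 1)) : ℤ) = 3 := by simp [hi3]
      rcases Nat.lt_or_ge i.val 2 with hlt | hge
      · by_cases h0 : i.val = 0
        · have : i = i0 := Fin.ext (by simp [hi0, h0])
          rw [this]; exact hbase
        · have h1 : i.val = 1 := by omega
          have e13 : k i * (s0 * k i * s0⁻¹)⁻¹ = k i3 * (s0 * k i3 * s0⁻¹)⁻¹ := by
            apply hstep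
            have hiz1 : ((i : Fin (n - 1)) : ℤ) = 1 := by exact_mod_cast h1
            rw [hiz1, h3z]
            norm_num
          have e30 : k i3 * (s0 * k i3 * s0⁻¹)⁻¹ = k i0 * (s0 * k i0 * s0⁻¹)⁻¹ := by
            apply hstep
            rw [h3z, h0z]
            norm_num
          exact e13.trans (e30.trans hbase)
      · have e : k i * (s0 * k i * s0⁻¹)⁻¹ = k i0 * (s0 * k i0 * s0⁻¹)⁻¹ := by
          apply hstep
          rw [hiz, h0z, sub_zero, abs_of_nonneg (by positivity)]
          exact_mod_cast hge
        exact e.trans hbase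
    have hfix : ∀ i, s0 * k i = k i * s0 := by
      intro i
      have h := hc1 i
      rw [mul_inv_eq_one, eq_mul_inv_iff_mul_eq] at h
      exact h.symm
    have hgen : ∀ i j, s i * s j = s j * s i := by
      intro i j
      rw [hsi i, hsi j]
      calc k i * s0 * (k j * s0) = k i * (s0 * k j) * s0 := by group
        _ = k i * (k j * s0) * s0 := by rw [hfix j]
        _ = (k i * k j) * s0 * s0 := by group
        _ = (k j * k i) * s0 * s0 := by rw [(hAcomm _ (hkA i) _ (hkA j)).eq]
        _ = k j * (k i * s0) * s0 := by group
        _ = k j * (s0 * k i) * s0 := by rw [← hfix i]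
        _ = k j * s0 * (k i * s0) := by group
    have hclos : Subgroup.closure (Set.range s) = ⊤ := by
      have h1 : Set.range s = π '' Set.range (braidGen (n := n)) := by
        rw [← Set.range_comp]; rfl
      have h2 : Subgroup.closure (Set.range (braidGen (n := n))) = ⊤ :=
        PresentedGroup.closure_range_of (braidRels n)
      rw [h1, ← MonoidHom.map_closure, h2]
      exact Subgroup.map_top_of_surjective π hπsurj
    have hcent : ∀ y : G ⧸ N, (∀ i, y * s i = s i * y) → ∀ x, x * y = y * x := by
      intro y hy x
      have hle : Subgroup.closure (Set.range s) ≤ Subgroup.centralizer {y} := by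
        rw [Subgroup.closure_le]
        rintro _ ⟨i, rfl⟩
        exact Subgroup.mem_centralizer_iff.mpr (by
          rintro h hh
          rw [Set.mem_singleton_iff] at hh
          rw [hh]
          exact hy i)
      have hx : x ∈ Subgroup.centralizer {y} := hle (hclos ▸ Subgroup.mem_top x)
      exact (Subgroup.mem_centralizer_iff.mp hx y rfl).symm
    have hcommall : ∀ x y : G ⧸ N, x * y = y * x := by
      intro x y
      refine hcent y (fun i => ?_) x
      exact hcent (s i) (fun j => hgen i j) y
    have hmap : K.map π = ⊥ := by
      rw [eq_bot_iff, hKdef, commutator_def, Subgroup.map_commutator,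
        Subgroup.map_top_of_surjective π hπsurj, Subgroup.commutator_le]
      intro g _ h _
      rw [Subgroup.mem_bot, commutatorElement_eq_one_iff_mul_comm]
      exact hcommall g h
    have hker := (Subgroup.map_eq_bot_iff K).mp hmap
    rwa [hπ, QuotientGroup.ker_mk'] at hker
  have keyeq : ⁅K, K⁆ = K := le_antisymm (Subgroup.commutator_le_left K K) key
  apply Subgroup.map_injective K.subtype_injective
  rw [commutator_def, Subgroup.map_commutator, ← MonoidHom.range_eq_map, Subgroup.range_subtype]
  exact keyeq
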